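/- In the non-commutative power series ring $\hat R = k\langle\langle a, b, c, d \rangle\rangle / (ab - ba,\ cd - dc,\ ad - da - bc + cb)$ (completion of the free algebra on 4 generators modulo the closed two-sided ideal generated by the three listed elements), the images of $ab - ba$, $cd - dc$, and $ad - da - bc + cb$ are zero, but $\hat R$ is not commutative: the image of $ac - ca$ is nonzero. -/
import Mathlib


/- STATEMENT 12: In `R̂ = k⟨⟨a,b,c,d⟩⟩/(ab−ba, cd−dc, ad−da−bc+cb)` the images of the
three relations are zero, but `R̂` is not commutative: the image of `ac − ca` is nonzero.

Encoding.  Mathlib has no noncommutative formal power series; we work in the quotient of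
the free associative algebra `k⟨a,b,c,d⟩` by the two-sided ideal generated by the three
quadratic relations (realized via `RingQuot`).  Since the relations and the element
`ac − ca` are homogeneous (of degree `2`), an element of degree `2` vanishes in the
completed quotient `R̂` iff it vanishes in this polynomial quotient, so the statement is
equivalent to the one about `R̂`. -/

noncomputable section

variable (k : Type) [Field k]

abbrev X (i : Fin 4) : FreeAlgebra k (Fin 4) := FreeAlgebra.ι k i

/-- The three defining relations `ab−ba`, `cd−dc`, `ad−da−bc+cb`. -/
def lineRel : FreeAlgebra k (Fin 4) → FreeAlgebra k (Fin 4) → Prop := fun x y =>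
  y = 0 ∧
    (x = X k 0 * X k 1 - X k 1 * X k 0 ∨
     x = X k 2 * X k 3 - X k 3 * X k 2 ∨
     x = X k 0 * X k 3 - X k 3 * X k 0 - X k 1 * X k 2 + X k 2 * X k 1)


/-- Representation of the free algebra into `2×2` matrices sending
`a ↦ E₁₂`, `b ↦ 0`, `c ↦ E₂₁`, `d ↦ 0`. -/
def rep : FreeAlgebra k (Fin 4) →ₐ[k] Matrix (Fin 2) (Fin 2) k :=
  FreeAlgebra.lift k (fun i => if i = 0 then !![0,1;0,0] else
    if i = 2 then !![0,0;1,0] else 0)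

lemma rep_rel : ∀ x y, lineRel k x y → (rep k) x = (rep k) y := by
  rintro x y ⟨rfl, h | h | h⟩ <;> subst h <;>
    simp [rep, FreeAlgebra.lift_ι_apply]

/-- The induced ring hom on the quotient. -/
def repQuot : RingQuot (lineRel k) →+* Matrix (Fin 2) (Fin 2) k :=
  RingQuot.lift ⟨(rep k).toRingHom, rep_rel k⟩

lemma repQuot_mk (x : FreeAlgebra k (Fin 4)) :
    repQuot k (RingQuot.mkRingHom (lineRel k) x) = rep k x := by
  have := RingQuot.lift_mkRingHom_apply (rep k).toRingHom (rep_rel k) x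
  simp [repQuot]

theorem statement12 :
    ((RingQuot.mkRingHom (lineRel k)) (X k 0 * X k 1 - X k 1 * X k 0) = 0 ∧
     (RingQuot.mkRingHom (lineRel k)) (X k 2 * X k 3 - X k 3 * X k 2) = 0 ∧
     (RingQuot.mkRingHom (lineRel k))
        (X k 0 * X k 3 - X k 3 * X k 0 - X k 1 * X k 2 + X k 2 * X k 1) = 0) ∧
    (RingQuot.mkRingHom (lineRel k)) (X k 0 * X k 2 - X k 2 * X k 0) ≠ 0 ∧
    ¬ (∀ x y : RingQuot (lineRel k), x * y = y * x) := by
  have hz : ∀ x : FreeAlgebra k (Fin 4), lineRel k x 0 →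
      RingQuot.mkRingHom (lineRel k) x = 0 := by
    intro x h
    have := RingQuot.mkRingHom_rel (r := lineRel k) h
    simpa using this
  have hne : (RingQuot.mkRingHom (lineRel k)) (X k 0 * X k 2 - X k 2 * X k 0) ≠ 0 := by
    intro h
    have h2 : rep k (X k 0 * X k 2 - X k 2 * X k 0) = 0 := by
      rw [← repQuot_mk, h, map_zero]
    have h3 : (!![0,1;0,0] * !![0,0;1,0] - !![0,0;1,0] * !![0,1;0,0]
        : Matrix (Fin 2) (Fin 2) k) = 0 := by
      simpa [rep, FreeAlgebra.lift_ι_apply] using h2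
    have := congrFun (congrFun h3 0) 0
    norm_num [Matrix.mul_apply, Fin.sum_univ_two] at this
  refine ⟨⟨hz _ ⟨rfl, Or.inl rfl⟩, hz _ ⟨rfl, Or.inr (Or.inl rfl)⟩,
    hz _ ⟨rfl, Or.inr (Or.inr rfl)⟩⟩, hne, fun h => ?_⟩
  apply hne
  rw [map_sub, map_mul, map_mul, h, sub_self]

end
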